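/- Let H be a homogeneous relation on X, M a homogeneous module of H, and N ⊆ M. Then N is a homogeneous module of the induced relation H[M] if and only if N is a homogeneous module of H. -/
import Mathlib


/-- `H` is a homogeneous relation: for each `x`, the binary relation
`H x · ·` is an equivalence relation on the elements distinct from `x`. -/
def IsHomRel {X : Type*} (H : X → X → X → Prop) : Prop :=
  (∀ x y, y ≠ x → H x y y) ∧
  (∀ x y z, y ≠ x → z ≠ x → H x y z → H x z y) ∧
  (∀ x y z w, y ≠ x → z ≠ x → w ≠ x → H x y z → H x z w → H x y w)

/-- `M` is a homogeneous module of `H`. -/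
def IsModule {X : Type*} (H : X → X → X → Prop) (M : Set X) : Prop :=
  ∀ m ∈ M, ∀ m' ∈ M, ∀ x ∉ M, H x m m'

/-- Two sets overlap. -/
def Overlap {X : Type*} (A B : Set X) : Prop :=
  (A ∩ B).Nonempty ∧ (A \ B).Nonempty ∧ (B \ A).Nonempty

/-- `N` is a homogeneous module of the relation `H` induced on `A`. -/
def IsModuleIn {X : Type*} (H : X → X → X → Prop) (A N : Set X) : Prop :=
  ∀ m ∈ N, ∀ m' ∈ N, ∀ x ∈ A, x ∉ N → H x m m'

theorem stmt_1 {X : Type*} [Fintype X] (H : X → X → X → Prop)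
    (hH : IsHomRel H) (M : Set X) (hM : IsModule H M)
    (N : Set X) (hNM : N ⊆ M) :
    IsModuleIn H M N ↔ IsModule H N := by
  constructor
  · intro h m hm m' hm' x hx
    by_cases hxM : x ∈ M
    · exact h m hm m' hm' x hxM hx
    · exact hM m (hNM hm) m' (hNM hm') x hxM
  · intro h m hm m' hm' x _ hx
    exact h m hm m' hm' x hx
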